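/- Let N ≥ 1 and define the N×N matrices S̃ and T, with rows and columns indexed by 0, 1, …, N−1, by S̃_{i,j} = (−1)^{j−i} binom(i, j−i) if i ≤ j ≤ 2i (and S̃_{i,j} = 0 otherwise), and T_{i,j} = (i/(2j−i)) · binom(2j−i, j−i) if 0 < i ≤ j, T_{0,0} = 1, and T_{i,j} = 0 otherwise. Then S̃ · T = Id and T · S̃ = Id; that is, T = S̃^{−1}. -/

import Mathlib

/-- The upper-triangular change-of-basis matrix `S̃` with entries
`S̃_{i,j} = (-1)^{j-i} binom(i, j-i)` for `i ≤ j ≤ 2i` and `0` otherwise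
(rows and columns indexed by `0, 1, …, N-1`). -/
def Stilde (N : ℕ) : Matrix (Fin N) (Fin N) ℚ := fun i j =>
  if (i : ℕ) ≤ (j : ℕ) ∧ (j : ℕ) ≤ 2 * (i : ℕ) then
    (-1 : ℚ) ^ ((j : ℕ) - (i : ℕ)) * ((i : ℕ).choose ((j : ℕ) - (i : ℕ)) : ℚ)
  else 0

/-- The matrix `T` with entries `T_{i,j} = (i/(2j-i))·binom(2j-i, j-i)` for `0 < i ≤ j`,
`T_{0,0} = 1`, and `T_{i,j} = 0` otherwise (rows and columns indexed by `0, 1, …, N-1`). -/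
def Tmat (N : ℕ) : Matrix (Fin N) (Fin N) ℚ := fun i j =>
  if (i : ℕ) = 0 ∧ (j : ℕ) = 0 then 1
  else if 0 < (i : ℕ) ∧ (i : ℕ) ≤ (j : ℕ) then
    (((i : ℕ) : ℚ) / ((2 * (j : ℕ) - (i : ℕ) : ℕ) : ℚ)) *
      ((2 * (j : ℕ) - (i : ℕ)).choose ((j : ℕ) - (i : ℕ)) : ℚ)
  else 0

def bal (j k : ℕ) : ℚ :=
  if j ≤ k then 2 * ((2*k - j - 1).choose (k - j) : ℚ) - ((2*k - j).choose (k - j) : ℚ) else 0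

lemma bal_of_lt {j k : ℕ} (h : k < j) : bal j k = 0 := by
  simp [bal, Nat.not_le.mpr h]

lemma bal_zero (k : ℕ) : bal 0 k = if k = 0 then 1 else 0 := by
  rcases k with _ | n
  · simp [bal]; norm_num
  · have hsymm : (2*n+1).choose n = (2*n+1).choose (n+1) := by
      have := Nat.choose_symm (show n+1 ≤ 2*n+1 by omega)
      rwa [show 2*n+1 - (n+1) = n by omega] at this
    have h1 : 2*(n+1) - 0 - 1 = 2*n+1 := by omega
    have h2 : 2*(n+1) - 0 = 2*n+2 := by omega
    have h3 : (n+1) - 0 = n+1 := by omega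
    simp only [bal, Nat.zero_le, if_true, h1, h2, h3]
    rw [show 2*n+2 = (2*n+1)+1 from rfl, Nat.choose_succ_succ (2*n+1) n]
    push_cast [hsymm]
    simp
    ring

lemma bal_diag (k : ℕ) : bal k k = 1 := by
  simp [bal, Nat.sub_self, show 2*k - k = k by omega]; norm_num

lemma bal_rec (j k : ℕ) (hj : 1 ≤ j) (hk : 1 ≤ k) :
    bal j k = bal (j-1) (k-1) + bal (j+1) k := by
  rcases lt_trichotomy k j with h | rfl | h
  · rw [bal_of_lt h, bal_of_lt (by omega : k - 1 < j - 1), bal_of_lt (by omega : k < j + 1)]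
    norm_num
  · rw [bal_diag, bal_diag, bal_of_lt (Nat.lt_succ_self _)]
    norm_num
  · -- j < k
    obtain ⟨d, rfl⟩ : ∃ d, k = j + (d + 1) := ⟨k - j - 1, by omega⟩
    have e1 : 2*(j + (d+1)) - j - 1 = (j + 2*d) + 1 := by omega
    have e2 : 2*(j + (d+1)) - j = (j + 2*d) + 2 := by omega
    have e3 : (j + (d+1)) - j = d + 1 := by omega
    have e4 : 2*((j + (d+1)) - 1) - (j-1) - 1 = j + 2*d := by omega
    have e5 : 2*((j + (d+1)) - 1) - (j-1) = (j + 2*d) + 1 := by omega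
    have e6 : ((j + (d+1)) - 1) - (j-1) = d + 1 := by omega
    have e7 : 2*(j + (d+1)) - (j+1) - 1 = j + 2*d := by omega
    have e8 : 2*(j + (d+1)) - (j+1) = (j + 2*d) + 1 := by omega
    have e9 : (j + (d+1)) - (j+1) = d := by omega
    rw [bal, bal, bal, if_pos (by omega), if_pos (by omega), if_pos (by omega),
      e1, e2, e3, e4, e5, e6, e7, e8, e9]
    set n := j + 2*d
    rw [show n + 2 = (n+1)+1 from rfl, Nat.choose_succ_succ (n+1) d,
      Nat.choose_succ_succ n d]
    push_cast
    ring

lemma ballot_formula (a d : ℕ) (ha : 1 ≤ a) :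
    ((a : ℚ) / ((a + 2*d : ℕ) : ℚ)) * ((a + 2*d).choose d : ℚ)
      = 2 * ((a + 2*d - 1).choose d : ℚ) - ((a + 2*d).choose d : ℚ) := by
  set n := a + 2*d with hn
  have hn1 : n = (n - 1) + 1 := by omega
  have h1 : n * (n-1).choose d = n.choose (d+1) * (d+1) := by
    have h := Nat.add_one_mul_choose_eq (n-1) d
    rw [show n-1+1 = n by omega] at h
    exact h
  have h2 : n.choose (d+1) * (d+1) = n.choose d * (a + d) := by
    rw [Nat.choose_succ_right_eq, show n - d = a + d by omega]
  have key : (n : ℚ) * ((n-1).choose d : ℚ) = (n.choose d : ℚ) * (a + d) := by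
    have := h1.trans h2
    exact_mod_cast congrArg (Nat.cast : ℕ → ℚ) this
  have hnz : ((n : ℕ) : ℚ) ≠ 0 := by
    have : 0 < n := by omega
    exact_mod_cast this.ne'
  have hcast : ((n : ℕ) : ℚ) = a + 2*d := by push_cast [hn]; ring
  field_simp
  linear_combination (-2) * key + ((n.choose d : ℚ)) * hcast

def Asum (i k : ℕ) : ℚ :=
  ∑ m ∈ Finset.range (i+1), (-1:ℚ)^m * (i.choose m : ℚ) * bal (i+m) k

lemma Asum_succ (i c : ℕ) : Asum (i+1) (c+1) = Asum i c := by
  have hA : Asum i c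
      = (∑ m ∈ Finset.range (i+1), (-1:ℚ)^m * (i.choose m : ℚ) * bal (i+1+m) (c+1))
        - ∑ m ∈ Finset.range (i+1), (-1:ℚ)^m * (i.choose m : ℚ) * bal (i+m+2) (c+1) := by
    rw [Asum, ← Finset.sum_sub_distrib]
    refine Finset.sum_congr rfl fun m hm => ?_
    have hr := bal_rec (i+1+m) (c+1) (by omega) (by omega)
    rw [show i+1+m-1 = i+m by omega, show c+1-1 = c by omega,
      show i+1+m+1 = i+m+2 by omega] at hr
    rw [hr]; ring
  have hS3 : (∑ m ∈ Finset.range (i+1), (-1:ℚ)^m * (i.choose (m+1) : ℚ) * bal (i+m+2) (c+1))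
      = ∑ m ∈ Finset.range i, (-1:ℚ)^m * (i.choose (m+1) : ℚ) * bal (i+m+2) (c+1) := by
    rw [Finset.sum_range_succ, Nat.choose_succ_self]
    push_cast; ring
  have hS1 : (∑ m ∈ Finset.range (i+1), (-1:ℚ)^m * (i.choose m : ℚ) * bal (i+1+m) (c+1))
      = bal (i+1) (c+1)
        - ∑ m ∈ Finset.range (i+1), (-1:ℚ)^m * (i.choose (m+1) : ℚ) * bal (i+m+2) (c+1) := by
    rw [Finset.sum_range_succ', hS3]
    have hc : ∀ m ∈ Finset.range i,
        (-1:ℚ)^(m+1) * (i.choose (m+1) : ℚ) * bal (i+1+(m+1)) (c+1)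
          = -((-1:ℚ)^m * (i.choose (m+1) : ℚ) * bal (i+m+2) (c+1)) := by
      intro m _
      rw [show i+1+(m+1) = i+m+2 by omega]; ring
    rw [Finset.sum_congr rfl hc, Finset.sum_neg_distrib]
    simp only [Nat.choose_zero_right, pow_zero, Nat.cast_one, add_zero]
    ring
  have hA2 : Asum (i+1) (c+1)
      = bal (i+1) (c+1)
        - (∑ m ∈ Finset.range (i+1), (-1:ℚ)^m * (i.choose (m+1) : ℚ) * bal (i+m+2) (c+1))
        - ∑ m ∈ Finset.range (i+1), (-1:ℚ)^m * (i.choose m : ℚ) * bal (i+m+2) (c+1) := by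
    rw [Asum, Finset.sum_range_succ']
    have hc : ∀ m ∈ Finset.range (i+1),
        (-1:ℚ)^(m+1) * ((i+1).choose (m+1) : ℚ) * bal (i+1+(m+1)) (c+1)
          = -((-1:ℚ)^m * (i.choose m : ℚ) * bal (i+m+2) (c+1))
            - (-1:ℚ)^m * (i.choose (m+1) : ℚ) * bal (i+m+2) (c+1) := by
      intro m _
      rw [show i+1+(m+1) = i+m+2 by omega, Nat.choose_succ_succ]
      push_cast; ring
    rw [Finset.sum_congr rfl hc, Finset.sum_sub_distrib, Finset.sum_neg_distrib]
    simp only [Nat.choose_zero_right, pow_zero, Nat.cast_one, add_zero]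
    ring
  rw [hA, hA2, hS1]

lemma Asum_eq (i k : ℕ) : Asum i k = if i = k then 1 else 0 := by
  induction i generalizing k with
  | zero =>
    simp only [Asum, Finset.sum_range_one, pow_zero, Nat.choose_zero_right,
      Nat.cast_one, one_mul, Nat.add_zero, Nat.zero_add, bal_zero]
    simp [eq_comm]
  | succ i ih =>
    rcases k with _ | c
    · rw [Asum, Finset.sum_eq_zero, if_neg (by omega)]
      intro m hm
      rw [bal_of_lt (by omega)]; ring
    · rw [Asum_succ, ih]
      simp [Nat.succ_inj]

lemma Tmat_eq_bal (N : ℕ) (i j : Fin N) : Tmat N i j = bal i j := by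
  rcases Nat.eq_zero_or_pos (i : ℕ) with h0 | hpos
  · rw [Tmat, h0, bal_zero]
    rcases Nat.eq_zero_or_pos (j : ℕ) with hj | hj
    · simp [hj]
    · rw [if_neg (by omega), if_neg (by omega), if_neg (by omega)]
  · rcases le_or_gt (i : ℕ) (j : ℕ) with hle | hlt
    · obtain ⟨d, hd⟩ : ∃ d, (j : ℕ) = (i : ℕ) + d := ⟨(j:ℕ) - i, by omega⟩
      rw [Tmat, if_neg (by omega), if_pos ⟨hpos, hle⟩, bal, if_pos hle]
      rw [show 2 * (j:ℕ) - (i:ℕ) = (i:ℕ) + 2*d by omega,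
        show (j:ℕ) - (i:ℕ) = d by omega,
        show (i:ℕ) + 2*d - 1 = ((i:ℕ) + 2*d) - 1 from rfl]
      exact ballot_formula i d hpos
    · rw [Tmat, if_neg (by omega), if_neg (by omega), bal_of_lt hlt]

/-- `S̃ · T = Id` and `T · S̃ = Id`; that is, `T = S̃⁻¹`. -/
theorem statement16 (N : ℕ) (hN : 1 ≤ N) :
    Stilde N * Tmat N = 1 ∧ Tmat N * Stilde N = 1 := by
  have part1 : Stilde N * Tmat N = 1 := by
    ext i k
    rw [Matrix.mul_apply, Matrix.one_apply]
    set g : ℕ → ℚ := fun j =>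
      (if (i:ℕ) ≤ j ∧ j ≤ 2*(i:ℕ) then
        (-1:ℚ)^(j-(i:ℕ)) * ((i:ℕ).choose (j-(i:ℕ)) : ℚ) else 0) * bal j (k:ℕ) with hg
    have step1 : ∑ j : Fin N, Stilde N i j * Tmat N j k = ∑ j ∈ Finset.range N, g j := by
      simp_rw [Tmat_eq_bal]
      exact Fin.sum_univ_eq_sum_range g N
    have hkN : (k:ℕ) < N := k.isLt
    set M := max N (2*(i:ℕ)+1) with hM
    have e1 : ∑ j ∈ Finset.range N, g j = ∑ j ∈ Finset.range M, g j := by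
      refine Finset.sum_subset (Finset.range_subset_range.mpr (le_max_left _ _)) ?_
      intro x hx hnx
      have hxN : N ≤ x := by simpa using hnx
      rw [hg]
      simp only []
      rw [bal_of_lt (by omega), mul_zero]
    have e2 : ∑ j ∈ Finset.range M, g j = ∑ j ∈ Finset.range (2*(i:ℕ)+1), g j := by
      refine (Finset.sum_subset (Finset.range_subset_range.mpr (le_max_right _ _)) ?_).symm
      intro x hx hnx
      have hxi : 2*(i:ℕ)+1 ≤ x := by simpa using hnx
      rw [hg]
      simp only []
      rw [if_neg (by omega), zero_mul]
    have e3 : ∑ j ∈ Finset.range (2*(i:ℕ)+1), g j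
        = ∑ j ∈ Finset.Ico (i:ℕ) (2*(i:ℕ)+1), g j := by
      rw [Finset.range_eq_Ico,
        ← Finset.sum_Ico_consecutive g (Nat.zero_le (i:ℕ)) (by omega : (i:ℕ) ≤ 2*(i:ℕ)+1)]
      have : ∑ j ∈ Finset.Ico 0 (i:ℕ), g j = 0 := by
        apply Finset.sum_eq_zero
        intro x hx
        have : x < (i:ℕ) := (Finset.mem_Ico.mp hx).2
        rw [hg]; simp only []
        rw [if_neg (by omega), zero_mul]
      rw [this, zero_add]
    have e4 : ∑ j ∈ Finset.Ico (i:ℕ) (2*(i:ℕ)+1), g j = Asum (i:ℕ) (k:ℕ) := by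
      rw [Finset.sum_Ico_eq_sum_range, show 2*(i:ℕ)+1 - (i:ℕ) = (i:ℕ)+1 by omega, Asum]
      refine Finset.sum_congr rfl fun m hm => ?_
      have hmi : m ≤ (i:ℕ) := by
        have := Finset.mem_range.mp hm; omega
      rw [hg]; simp only []
      rw [if_pos (by omega : (i:ℕ) ≤ (i:ℕ)+m ∧ (i:ℕ)+m ≤ 2*(i:ℕ)),
        show (i:ℕ)+m-(i:ℕ) = m by omega]
    rw [step1, e1, e2, e3, e4, Asum_eq]
    by_cases h : i = k
    · rw [if_pos h, if_pos (by rw [h])]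
    · rw [if_neg h, if_neg (fun hc => h (Fin.ext hc))]
  exact ⟨part1, mul_eq_one_comm.mp part1⟩
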